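/- In the coupled transport setting: for any two pairs of continuous functions (C¹,H¹) and (C²,H²) from [0,T] to ℝ, and for all t ∈ [0,T] and x ∈ ℝ, |F(C¹,H¹)(t,x) − F(C²,H²)(t,x)| ≤ k_{F₀}·exp(B_N·T)·T·(L_N + L_a)·( sup_{s∈[0,T]} |C¹(s) − C²(s)| + sup_{s∈[0,T]} |H¹(s) − H²(s)| ). -/

import Mathlib

lemma exp_lip_aux {a b M : ℝ} (ha : a ≤ M) (hb : b ≤ M) :
    |Real.exp a - Real.exp b| ≤ Real.exp M * |a - b| := by
  wlog h : b ≤ a generalizing a b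
  · rw [abs_sub_comm, abs_sub_comm a b]; exact this hb ha (not_le.1 h).le
  rw [abs_of_nonneg (sub_nonneg.2 (Real.exp_le_exp.2 h)), abs_of_nonneg (sub_nonneg.2 h)]
  have h1 : 1 - (a - b) ≤ Real.exp (-(a - b)) := by
    have := Real.add_one_le_exp (-(a - b)); linarith
  have h2 : Real.exp b = Real.exp a * Real.exp (-(a - b)) := by
    rw [← Real.exp_add]; ring_nf
  have h3 : Real.exp a - Real.exp b ≤ Real.exp a * (a - b) := by
    nlinarith [Real.exp_pos a]
  calc Real.exp a - Real.exp b ≤ Real.exp a * (a - b) := h3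
    _ ≤ Real.exp M * (a - b) :=
      mul_le_mul_of_nonneg_right (Real.exp_le_exp.2 ha) (sub_nonneg.2 h)

theorem stmt_13 (T Ba BN La LN kF0 : ℝ) (hT : 0 < T)
    (a N : ℝ → ℝ → ℝ)
    (haB : ∀ c h : ℝ, |a c h| ≤ Ba) (hNB : ∀ c h : ℝ, |N c h| ≤ BN)
    (haL : ∀ c₁ h₁ c₂ h₂ : ℝ, |a c₁ h₁ - a c₂ h₂| ≤ La * (|c₁ - c₂| + |h₁ - h₂|))
    (hNL : ∀ c₁ h₁ c₂ h₂ : ℝ, |N c₁ h₁ - N c₂ h₂| ≤ LN * (|c₁ - c₂| + |h₁ - h₂|))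
    (F₀ : ℝ → ℝ)
    (hF0b : ∀ x : ℝ, |F₀ x| ≤ kF0)
    (hF0L : ∀ x y : ℝ, |F₀ x - F₀ y| ≤ kF0 * |x - y|)
    (F : (ℝ → ℝ) → (ℝ → ℝ) → ℝ → ℝ → ℝ)
    (hF : ∀ (C H : ℝ → ℝ) (t x : ℝ), F C H t x =
      Real.exp (∫ s in (0:ℝ)..t, N (C s) (H s)) *
        F₀ (x - ∫ s in (0:ℝ)..t, a (C s) (H s)))
    (C₁ H₁ C₂ H₂ : ℝ → ℝ)
    (hC₁ : ContinuousOn C₁ (Set.Icc 0 T)) (hH₁ : ContinuousOn H₁ (Set.Icc 0 T))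
    (hC₂ : ContinuousOn C₂ (Set.Icc 0 T)) (hH₂ : ContinuousOn H₂ (Set.Icc 0 T)) :
    ∀ t ∈ Set.Icc (0:ℝ) T, ∀ x : ℝ,
      |F C₁ H₁ t x - F C₂ H₂ t x| ≤
        kF0 * Real.exp (BN * T) * T * (LN + La) *
          (sSup ((fun s => |C₁ s - C₂ s|) '' Set.Icc (0:ℝ) T) +
           sSup ((fun s => |H₁ s - H₂ s|) '' Set.Icc (0:ℝ) T)) := by
  -- nonnegativity facts
  have hkF0 : 0 ≤ kF0 := (abs_nonneg _).trans (hF0b 0)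
  have hBN : 0 ≤ BN := (abs_nonneg _).trans (hNB 0 0)
  have hLN : 0 ≤ LN := by
    have := hNL 1 0 0 0
    simp at this
    linarith [abs_nonneg (N 1 0 - N 0 0)]
  have hLa : 0 ≤ La := by
    have := haL 1 0 0 0
    simp at this
    linarith [abs_nonneg (a 1 0 - a 0 0)]
  set MC := sSup ((fun s => |C₁ s - C₂ s|) '' Set.Icc (0:ℝ) T) with hMCdef
  set MH := sSup ((fun s => |H₁ s - H₂ s|) '' Set.Icc (0:ℝ) T) with hMHdef
  have h0T : (0:ℝ) ∈ Set.Icc (0:ℝ) T := ⟨le_refl 0, hT.le⟩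
  have hbddC : BddAbove ((fun s => |C₁ s - C₂ s|) '' Set.Icc (0:ℝ) T) :=
    (isCompact_Icc.image_of_continuousOn ((hC₁.sub hC₂).abs)).bddAbove
  have hbddH : BddAbove ((fun s => |H₁ s - H₂ s|) '' Set.Icc (0:ℝ) T) :=
    (isCompact_Icc.image_of_continuousOn ((hH₁.sub hH₂).abs)).bddAbove
  have hMCle : ∀ s ∈ Set.Icc (0:ℝ) T, |C₁ s - C₂ s| ≤ MC := fun s hs =>
    le_csSup hbddC ⟨s, hs, rfl⟩
  have hMHle : ∀ s ∈ Set.Icc (0:ℝ) T, |H₁ s - H₂ s| ≤ MH := fun s hs =>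
    le_csSup hbddH ⟨s, hs, rfl⟩
  have hMC0 : 0 ≤ MC := (abs_nonneg _).trans (hMCle 0 h0T)
  have hMH0 : 0 ≤ MH := (abs_nonneg _).trans (hMHle 0 h0T)
  -- continuity of integrands
  have hNlip : LipschitzWith (Real.toNNReal (2 * LN)) (fun p : ℝ × ℝ => N p.1 p.2) := by
    apply LipschitzWith.of_dist_le_mul
    intro p q
    rw [Real.coe_toNNReal _ (by linarith)]
    simp only [Real.dist_eq, Prod.dist_eq]
    calc |N p.1 p.2 - N q.1 q.2| ≤ LN * (|p.1 - q.1| + |p.2 - q.2|) := hNL _ _ _ _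
      _ ≤ 2 * LN * max |p.1 - q.1| |p.2 - q.2| := by
          have := le_max_left |p.1 - q.1| |p.2 - q.2|
          have := le_max_right |p.1 - q.1| |p.2 - q.2|
          nlinarith
  have halip : LipschitzWith (Real.toNNReal (2 * La)) (fun p : ℝ × ℝ => a p.1 p.2) := by
    apply LipschitzWith.of_dist_le_mul
    intro p q
    rw [Real.coe_toNNReal _ (by linarith)]
    simp only [Real.dist_eq, Prod.dist_eq]
    calc |a p.1 p.2 - a q.1 q.2| ≤ La * (|p.1 - q.1| + |p.2 - q.2|) := haL _ _ _ _
      _ ≤ 2 * La * max |p.1 - q.1| |p.2 - q.2| := by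
          have := le_max_left |p.1 - q.1| |p.2 - q.2|
          have := le_max_right |p.1 - q.1| |p.2 - q.2|
          nlinarith
  have contN1 : ContinuousOn (fun s => N (C₁ s) (H₁ s)) (Set.Icc 0 T) :=
    hNlip.continuous.comp_continuousOn (hC₁.prodMk hH₁)
  have contN2 : ContinuousOn (fun s => N (C₂ s) (H₂ s)) (Set.Icc 0 T) :=
    hNlip.continuous.comp_continuousOn (hC₂.prodMk hH₂)
  have conta1 : ContinuousOn (fun s => a (C₁ s) (H₁ s)) (Set.Icc 0 T) :=
    halip.continuous.comp_continuousOn (hC₁.prodMk hH₁)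
  have conta2 : ContinuousOn (fun s => a (C₂ s) (H₂ s)) (Set.Icc 0 T) :=
    halip.continuous.comp_continuousOn (hC₂.prodMk hH₂)
  intro t ht x
  have huIcc : Set.uIcc (0:ℝ) t ⊆ Set.Icc 0 T := by
    rw [Set.uIcc_of_le ht.1]
    exact Set.Icc_subset_Icc le_rfl ht.2
  have huIoc : Set.uIoc (0:ℝ) t ⊆ Set.Icc 0 T := by
    rw [Set.uIoc_of_le ht.1]
    exact fun s hs => ⟨hs.1.le, hs.2.trans ht.2⟩
  set IN1 := ∫ s in (0:ℝ)..t, N (C₁ s) (H₁ s) with hIN1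
  set IN2 := ∫ s in (0:ℝ)..t, N (C₂ s) (H₂ s) with hIN2
  set Ia1 := ∫ s in (0:ℝ)..t, a (C₁ s) (H₁ s) with hIa1
  set Ia2 := ∫ s in (0:ℝ)..t, a (C₂ s) (H₂ s) with hIa2
  have intN1 : IntervalIntegrable (fun s => N (C₁ s) (H₁ s)) MeasureTheory.volume 0 t :=
    (contN1.mono huIcc).intervalIntegrable
  have intN2 : IntervalIntegrable (fun s => N (C₂ s) (H₂ s)) MeasureTheory.volume 0 t :=
    (contN2.mono huIcc).intervalIntegrable
  have inta1 : IntervalIntegrable (fun s => a (C₁ s) (H₁ s)) MeasureTheory.volume 0 t :=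
    (conta1.mono huIcc).intervalIntegrable
  have inta2 : IntervalIntegrable (fun s => a (C₂ s) (H₂ s)) MeasureTheory.volume 0 t :=
    (conta2.mono huIcc).intervalIntegrable
  -- bounds on integrals
  have hIN1b : |IN1| ≤ BN * T := by
    have := intervalIntegral.norm_integral_le_of_norm_le_const
      (C := BN) (f := fun s => N (C₁ s) (H₁ s)) (a := (0:ℝ)) (b := t)
      (fun s _ => hNB (C₁ s) (H₁ s))
    rw [Real.norm_eq_abs] at this
    have : |IN1| ≤ BN * |t - 0| := this
    have ht0 : |t - 0| = t := by rw [sub_zero, abs_of_nonneg ht.1]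
    rw [ht0] at this
    exact this.trans (by nlinarith [ht.2])
  have hIN2b : |IN2| ≤ BN * T := by
    have := intervalIntegral.norm_integral_le_of_norm_le_const
      (C := BN) (f := fun s => N (C₂ s) (H₂ s)) (a := (0:ℝ)) (b := t)
      (fun s _ => hNB (C₂ s) (H₂ s))
    rw [Real.norm_eq_abs] at this
    have : |IN2| ≤ BN * |t - 0| := this
    have ht0 : |t - 0| = t := by rw [sub_zero, abs_of_nonneg ht.1]
    rw [ht0] at this
    exact this.trans (by nlinarith [ht.2])
  have hINd : |IN1 - IN2| ≤ LN * (MC + MH) * t := by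
    have heq : IN1 - IN2 = ∫ s in (0:ℝ)..t, (N (C₁ s) (H₁ s) - N (C₂ s) (H₂ s)) :=
      (intervalIntegral.integral_sub intN1 intN2).symm
    rw [heq]
    have := intervalIntegral.norm_integral_le_of_norm_le_const
      (C := LN * (MC + MH)) (a := (0:ℝ)) (b := t)
      (f := fun s => N (C₁ s) (H₁ s) - N (C₂ s) (H₂ s))
      (fun s hs => by
        have hsT := huIoc hs
        have h1 := hNL (C₁ s) (H₁ s) (C₂ s) (H₂ s)
        have h2 := hMCle s hsT
        have h3 := hMHle s hsT
        rw [Real.norm_eq_abs]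
        nlinarith)
    rw [Real.norm_eq_abs, sub_zero, abs_of_nonneg ht.1] at this
    exact this
  have hIad : |Ia1 - Ia2| ≤ La * (MC + MH) * t := by
    have heq : Ia1 - Ia2 = ∫ s in (0:ℝ)..t, (a (C₁ s) (H₁ s) - a (C₂ s) (H₂ s)) :=
      (intervalIntegral.integral_sub inta1 inta2).symm
    rw [heq]
    have := intervalIntegral.norm_integral_le_of_norm_le_const
      (C := La * (MC + MH)) (a := (0:ℝ)) (b := t)
      (f := fun s => a (C₁ s) (H₁ s) - a (C₂ s) (H₂ s))
      (fun s hs => by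
        have hsT := huIoc hs
        have h1 := haL (C₁ s) (H₁ s) (C₂ s) (H₂ s)
        have h2 := hMCle s hsT
        have h3 := hMHle s hsT
        rw [Real.norm_eq_abs]
        nlinarith)
    rw [Real.norm_eq_abs, sub_zero, abs_of_nonneg ht.1] at this
    exact this
  -- main decomposition
  have key : F C₁ H₁ t x - F C₂ H₂ t x =
      Real.exp IN1 * (F₀ (x - Ia1) - F₀ (x - Ia2)) +
      (Real.exp IN1 - Real.exp IN2) * F₀ (x - Ia2) := by
    rw [hF, hF]; ring
  rw [key]
  have hE1 : Real.exp IN1 ≤ Real.exp (BN * T) :=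
    Real.exp_le_exp.2 ((le_abs_self _).trans hIN1b)
  have hExp : |Real.exp IN1 - Real.exp IN2| ≤ Real.exp (BN * T) * |IN1 - IN2| :=
    exp_lip_aux ((le_abs_self _).trans hIN1b) ((le_abs_self _).trans hIN2b)
  have hF0d : |F₀ (x - Ia1) - F₀ (x - Ia2)| ≤ kF0 * |Ia1 - Ia2| := by
    have := hF0L (x - Ia1) (x - Ia2)
    have heq : |x - Ia1 - (x - Ia2)| = |Ia1 - Ia2| := by
      rw [show x - Ia1 - (x - Ia2) = -(Ia1 - Ia2) by ring, abs_neg]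
    rwa [heq] at this
  have hEpos : (0:ℝ) < Real.exp (BN * T) := Real.exp_pos _
  calc |Real.exp IN1 * (F₀ (x - Ia1) - F₀ (x - Ia2)) +
        (Real.exp IN1 - Real.exp IN2) * F₀ (x - Ia2)|
      ≤ |Real.exp IN1 * (F₀ (x - Ia1) - F₀ (x - Ia2))| +
        |(Real.exp IN1 - Real.exp IN2) * F₀ (x - Ia2)| := abs_add_le _ _
    _ ≤ Real.exp (BN * T) * (kF0 * (La * (MC + MH) * t)) +
        Real.exp (BN * T) * (LN * (MC + MH) * t) * kF0 := by
        rw [abs_mul, abs_mul, abs_of_pos (Real.exp_pos IN1)]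
        have t1 : Real.exp IN1 * |F₀ (x - Ia1) - F₀ (x - Ia2)| ≤
            Real.exp (BN * T) * (kF0 * (La * (MC + MH) * t)) := by
          have h4 : |F₀ (x - Ia1) - F₀ (x - Ia2)| ≤ kF0 * (La * (MC + MH) * t) :=
            hF0d.trans (mul_le_mul_of_nonneg_left hIad hkF0)
          exact mul_le_mul hE1 h4 (abs_nonneg _) hEpos.le
        have t2 : |Real.exp IN1 - Real.exp IN2| * |F₀ (x - Ia2)| ≤
            Real.exp (BN * T) * (LN * (MC + MH) * t) * kF0 := by
          have h5 : |Real.exp IN1 - Real.exp IN2| ≤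
              Real.exp (BN * T) * (LN * (MC + MH) * t) :=
            hExp.trans (mul_le_mul_of_nonneg_left hINd hEpos.le)
          exact mul_le_mul h5 (hF0b _) (abs_nonneg _)
            (mul_nonneg hEpos.le (mul_nonneg (mul_nonneg hLN (by linarith)) ht.1))
        linarith
    _ = kF0 * Real.exp (BN * T) * (LN + La) * (MC + MH) * t := by ring
    _ ≤ kF0 * Real.exp (BN * T) * (LN + La) * (MC + MH) * T := by
        have hq : 0 ≤ kF0 * Real.exp (BN * T) * (LN + La) * (MC + MH) :=
          mul_nonneg (mul_nonneg (mul_nonneg hkF0 hEpos.le) (by linarith)) (by linarith)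
        exact mul_le_mul_of_nonneg_left ht.2 hq
    _ = kF0 * Real.exp (BN * T) * T * (LN + La) * (MC + MH) := by ring
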